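/- Let L be a k×k real matrix with the strong Perron–Frobenius property with dominant eigenvalue τ, let x_0 ∈ ℝ^k be cyclic for L, and assume every entry of L^n · x_0 is strictly positive for every n ≥ 0. Let M_n be the coding matrices generated by L and x_0. Then for any column indices j, j' ∈ {0, …, k−1}, both the minimum over l = 0,…,k−1 of M_n(l,j)/M_n(l,j') and the maximum over l = 0,…,k−1 of M_n(l,j)/M_n(l,j') converge to τ^{j'−j} as n → ∞; i.e. both bounds in the checking relations converge to τ^{j'−j}. -/

import Mathlib

open Matrix Polynomial Filter

/-- `L` has the strong Perron–Frobenius property with dominant eigenvalue `τ`. -/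
def StrongPerronFrobenius {k : ℕ} (L : Matrix (Fin k) (Fin k) ℝ) (τ : ℝ) : Prop :=
  0 < τ ∧
  L.charpoly.rootMultiplicity τ = 1 ∧
  (∀ z : ℂ, (L.charpoly.map (algebraMap ℝ ℂ)).IsRoot z → z ≠ (τ : ℂ) →
    ‖z‖ < τ) ∧
  ∃ u : Fin k → ℝ, (∀ i, 0 < u i) ∧ L.mulVec u = τ • u

/-- `x₀` is a cyclic vector for `L`. -/
def IsCyclicVec {k : ℕ} (L : Matrix (Fin k) (Fin k) ℝ) (x0 : Fin k → ℝ) : Prop :=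
  Submodule.span ℝ (Set.range fun j : Fin k => (L ^ (j : ℕ)).mulVec x0) = ⊤

/-- The coding matrices generated by `L` and `x₀`. -/
noncomputable def codingMatrix {k : ℕ} (L : Matrix (Fin k) (Fin k) ℝ)
    (x0 : Fin k → ℝ) (n : ℕ) : Matrix (Fin k) (Fin k) ℝ :=
  Matrix.of fun (i j : Fin k) => (L ^ (n + (k - 1 - (j : ℕ)))).mulVec x0 i

section PFaux2

open scoped ENNReal NNReal

attribute [local instance] Matrix.linftyOpNormedRing Matrix.linftyOpNormedAlgebra

namespace PFaux

variable {k : ℕ}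

lemma eval_charpoly {R} [CommRing R] (M : Matrix (Fin k) (Fin k) R) (t : R) :
    M.charpoly.eval t = (t • (1 : Matrix (Fin k) (Fin k) R) - M).det := by
  rw [Matrix.charpoly, ← coe_evalRingHom, RingHom.map_det]
  congr 1
  ext i j
  by_cases h : i = j <;>
    simp [h, charmatrix_apply_eq, charmatrix_apply_ne, Matrix.one_apply]

lemma pow_mulVec_eigen {S} [CommRing S] (M : Matrix (Fin k) (Fin k) S) (t : S) (u : Fin k → S)
    (h : M *ᵥ u = t • u) (n : ℕ) : (M ^ n) *ᵥ u = t ^ n • u := by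
  induction n with
  | zero => simp
  | succ n ih =>
    rw [pow_succ, ← Matrix.mulVec_mulVec, h, Matrix.mulVec_smul, ih, pow_succ, smul_smul,
      mul_comm]

lemma aeval_mulVec_eigen {R S} [CommRing R] [CommRing S] [Algebra R S]
    (M : Matrix (Fin k) (Fin k) S) (t : S) (u : Fin k → S) (h : M *ᵥ u = t • u) (p : R[X]) :
    (aeval M p) *ᵥ u = (aeval t p) • u := by
  induction p using Polynomial.induction_on' with
  | add p q hp hq => rw [map_add, map_add, Matrix.add_mulVec, hp, hq, add_smul]
  | monomial n a =>
    rw [aeval_monomial, aeval_monomial, ← Matrix.mulVec_mulVec, pow_mulVec_eigen M t u h,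
      Matrix.mulVec_smul, Algebra.algebraMap_eq_smul_one, Matrix.smul_mulVec,
      Matrix.one_mulVec, mul_smul, algebraMap_smul, smul_comm]

lemma entry_le_norm (M : Matrix (Fin k) (Fin k) ℂ) (i j : Fin k) : ‖M i j‖₊ ≤ ‖M‖₊ := by
  rw [Matrix.linfty_opNNNorm_def]
  exact le_trans (Finset.single_le_sum (f := fun j => ‖M i j‖₊) (fun _ _ => zero_le)
    (Finset.mem_univ j)) (Finset.le_sup (f := fun i => ∑ j, ‖M i j‖₊) (Finset.mem_univ i))

lemma tendsto_iInf' {ι : Type*} [Fintype ι] [Nonempty ι] (f : ι → ℕ → ℝ) (A : ℝ)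
    (h : ∀ i, Tendsto (f i) atTop (nhds A)) :
    Tendsto (fun n => ⨅ i, f i n) atTop (nhds A) := by
  rw [Metric.tendsto_atTop]
  intro ε hε
  have hev : ∀ᶠ n in atTop, ∀ i, dist (f i n) A < ε / 2 :=
    eventually_all.mpr fun i => (h i).eventually (Metric.ball_mem_nhds A (by positivity))
  obtain ⟨N, hN⟩ := hev.exists_forall_of_atTop
  refine ⟨N, fun n hn => ?_⟩
  have hi : ∀ i, |f i n - A| < ε / 2 := fun i => by
    have := hN n hn i; rwa [Real.dist_eq] at this
  have hbdd : BddBelow (Set.range fun i => f i n) := (Set.finite_range _).bddBelow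
  obtain ⟨i₀⟩ := ‹Nonempty ι›
  have hlow : A - ε / 2 ≤ ⨅ i, f i n :=
    le_ciInf fun i => by have := abs_sub_lt_iff.mp (hi i); linarith [this.2]
  have hup : (⨅ i, f i n) ≤ f i₀ n := ciInf_le hbdd i₀
  have := abs_sub_lt_iff.mp (hi i₀)
  rw [Real.dist_eq, abs_sub_lt_iff]
  constructor <;> linarith [this.1, this.2]

lemma tendsto_iSup' {ι : Type*} [Fintype ι] [Nonempty ι] (f : ι → ℕ → ℝ) (A : ℝ)
    (h : ∀ i, Tendsto (f i) atTop (nhds A)) :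
    Tendsto (fun n => ⨆ i, f i n) atTop (nhds A) := by
  rw [Metric.tendsto_atTop]
  intro ε hε
  have hev : ∀ᶠ n in atTop, ∀ i, dist (f i n) A < ε / 2 :=
    eventually_all.mpr fun i => (h i).eventually (Metric.ball_mem_nhds A (by positivity))
  obtain ⟨N, hN⟩ := hev.exists_forall_of_atTop
  refine ⟨N, fun n hn => ?_⟩
  have hi : ∀ i, |f i n - A| < ε / 2 := fun i => by
    have := hN n hn i; rwa [Real.dist_eq] at this
  have hbdd : BddAbove (Set.range fun i => f i n) := (Set.finite_range _).bddAbove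
  obtain ⟨i₀⟩ := ‹Nonempty ι›
  have hup : (⨆ i, f i n) ≤ A + ε / 2 :=
    ciSup_le fun i => by have := abs_sub_lt_iff.mp (hi i); linarith [this.1]
  have hlow : f i₀ n ≤ ⨆ i, f i n := le_ciSup hbdd i₀
  have := abs_sub_lt_iff.mp (hi i₀)
  rw [Real.dist_eq, abs_sub_lt_iff]
  constructor <;> linarith [this.1, this.2]


lemma eigen_span (L : Matrix (Fin k) (Fin k) ℝ) (τ : ℝ)
    (hmult : L.charpoly.rootMultiplicity τ = 1)
    {u w : Fin k → ℝ} (hu : u ≠ 0) (huL : L *ᵥ u = τ • u) (hwL : L *ᵥ w = τ • w) :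
    ∃ c : ℝ, w = c • u := by
  by_contra hc
  push_neg at hc
  classical
  -- the pair (w, u) is linearly independent
  have hli2 : LinearIndependent ℝ ![w, u] := by
    rw [linearIndependent_fin2]
    refine ⟨by simpa using hu, fun a ha => hc a ?_⟩
    simpa using ha.symm
  have huw : u ≠ w := fun h => hc 1 (by simp [h])
  have hset : ({w, u} : Set (Fin k → ℝ)) = Set.range ![w, u] := by
    simp [Set.range_comp]
    ext x
    simp [Fin.exists_fin_two]
    tauto
  have hli : LinearIndependent ℝ ((↑) : ({w, u} : Set (Fin k → ℝ)) → (Fin k → ℝ)) := by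
    rw [hset]
    exact (linearIndepOn_id_range_iff hli2.injective).mpr hli2
  -- extend to a basis
  set t := LinearIndepOn.extend (show LinearIndepOn ℝ id ({w, u} : Set (Fin k → ℝ)) from hli) (Set.subset_univ _) with ht
  set b : Module.Basis t ℝ (Fin k → ℝ) := Module.Basis.extend hli with hb
  haveI : Fintype t := FiniteDimensional.fintypeBasisIndex b
  have hsub : ({w, u} : Set (Fin k → ℝ)) ⊆ t := LinearIndepOn.subset_extend (show LinearIndepOn ℝ id ({w, u} : Set (Fin k → ℝ)) from hli) _
  set i₀ : t := ⟨u, hsub (by simp)⟩ with hi₀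
  set i₁ : t := ⟨w, hsub (by simp)⟩ with hi₁
  have hne : i₀ ≠ i₁ := fun h => huw (congrArg Subtype.val h)
  set f := Matrix.toLin' L with hf
  set A := LinearMap.toMatrix b b f with hA
  have hcp : A.charpoly = L.charpoly := by
    rw [LinearMap.charpoly_toMatrix]
    conv_rhs => rw [← LinearMap.toMatrix'_toLin' L]
    rw [← LinearMap.toMatrix_eq_toMatrix']
    exact (LinearMap.charpoly_toMatrix _ _).symm
  -- columns of A at i₀ and i₁
  have hcol : ∀ (i₂ : t), (∀ x, (b i₂ : Fin k → ℝ) = x → L *ᵥ x = τ • x) →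
      ∀ i, A i i₂ = if i = i₂ then τ else 0 := by
    intro i₂ hx i
    rw [hA, LinearMap.toMatrix_apply]
    have : f (b i₂) = τ • b i₂ := by
      rw [hf, Matrix.toLin'_apply]
      exact hx _ rfl
    rw [this, _root_.map_smul, b.repr_self]
    simp [Finsupp.single_apply, eq_comm]
  have hcol0 : ∀ i, A i i₀ = if i = i₀ then τ else 0 := by
    refine hcol i₀ (fun x hx => ?_)
    have : (b i₀ : Fin k → ℝ) = u := Module.Basis.extend_apply_self hli i₀
    rw [← hx, this]; exact huL
  have hcol1 : ∀ i, A i i₁ = if i = i₁ then τ else 0 := by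
    refine hcol i₁ (fun x hx => ?_)
    have : (b i₁ : Fin k → ℝ) = w := Module.Basis.extend_apply_self hli i₁
    rw [← hx, this]; exact hwL
  -- (X - C τ)^2 divides the charpoly
  have hdvd : (X - C τ) ^ 2 ∣ A.charpoly := by
    set N := charmatrix A with hN
    have hNcol : ∀ (i₂ : t), (∀ i, A i i₂ = if i = i₂ then τ else 0) →
        ∀ i, N i i₂ = (X - C τ) * (if i = i₂ then 1 else 0) := by
      intro i₂ h i
      by_cases hii : i = i₂
      · subst hii; simp [hN, charmatrix_apply_eq, h i, mul_one]
      · simp [hN, charmatrix_apply_ne _ _ _ hii, h i, hii]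
    set e₀ : t → ℝ[X] := fun i => if i = i₀ then 1 else 0 with he₀
    set e₁ : t → ℝ[X] := fun i => if i = i₁ then 1 else 0 with he₁
    set N₁ := N.updateCol i₀ e₀ with hN₁
    have step1 : N.det = (X - C τ) * N₁.det := by
      have : N = N.updateCol i₀ ((X - C τ) • e₀) := by
        refine Matrix.ext fun i jx => ?_
        rw [Matrix.updateCol_apply]
        split
        · next h => subst h; rw [Pi.smul_apply, smul_eq_mul]; exact hNcol i₀ hcol0 i
        · rfl
      conv_lhs => rw [this]
      rw [Matrix.det_updateCol_smul]
    have step2 : N₁.det = (X - C τ) * (N₁.updateCol i₁ e₁).det := by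
      have : N₁ = N₁.updateCol i₁ ((X - C τ) • e₁) := by
        refine Matrix.ext fun i jx => ?_
        rw [Matrix.updateCol_apply]
        split
        · next h =>
            subst h
            rw [Pi.smul_apply, smul_eq_mul, hN₁, Matrix.updateCol_apply, if_neg hne.symm]
            exact hNcol i₁ hcol1 i
        · rfl
      conv_lhs => rw [this]
      rw [Matrix.det_updateCol_smul]
    refine ⟨(N₁.updateCol i₁ e₁).det, ?_⟩
    rw [Matrix.charpoly, ← hN, step1, step2]
    ring
  have h2 : 2 ≤ L.charpoly.rootMultiplicity τ := by
    rw [← hcp]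
    rw [Polynomial.le_rootMultiplicity_iff (Matrix.charpoly_monic A).ne_zero]
    exact hdvd
  omega


/-- Key convergence lemma. -/
lemma key (hk : 0 < k) (L : Matrix (Fin k) (Fin k) ℝ) (τ : ℝ)
    (hL : StrongPerronFrobenius L τ) (x0 : Fin k → ℝ) (hx0 : IsCyclicVec L x0)
    (hpos : ∀ n : ℕ, ∀ i : Fin k, 0 < (L ^ n).mulVec x0 i) :
    ∃ y : Fin k → ℝ, (∀ l, 0 < y l) ∧
      ∀ l, Tendsto (fun n : ℕ => (L ^ n).mulVec x0 l / τ ^ n) atTop (nhds (y l)) := by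
  classical
  haveI : Nonempty (Fin k) := ⟨⟨0, hk⟩⟩
  obtain ⟨hτ, hmult, hroots, u, hu, huL⟩ := hL
  have hune : u ≠ 0 := fun h => (hu ⟨0, hk⟩).ne' (by rw [h]; rfl)
  have hp0 : L.charpoly ≠ 0 := (Matrix.charpoly_monic L).ne_zero
  have hroot : IsRoot L.charpoly τ := by
    rw [← Polynomial.rootMultiplicity_pos hp0]
    omega
  obtain ⟨q, hq⟩ : (X - C τ) ∣ L.charpoly := dvd_iff_isRoot.mpr hroot
  set c : ℝ := q.eval τ with hc
  have hqτ : c ≠ 0 := by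
    intro h0
    have h2 : (X - C τ) ^ 2 ∣ L.charpoly := by
      obtain ⟨r, hr⟩ := dvd_iff_isRoot.mpr (show IsRoot q τ from h0)
      exact ⟨r, by rw [hq, hr]; ring⟩
    have := (Polynomial.le_rootMultiplicity_iff hp0).mpr h2
    omega
  set A : Matrix (Fin k) (Fin k) ℝ := aeval L q with hAdef
  set P : Matrix (Fin k) (Fin k) ℝ := c⁻¹ • A with hPdef
  have haq : aeval L ((X - C τ) * q) = 0 := by
    rw [← hq]; exact Matrix.aeval_self_charpoly L
  have hLA : L * A = τ • A := by
    have h1 : (L - τ • 1) * A = 0 := by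
      have hXC : aeval L (X - C τ) = L - τ • 1 := by
        simp [Algebra.algebraMap_eq_smul_one]
      rw [← hXC, hAdef, ← _root_.map_mul, haq]
    rw [sub_mul, smul_mul_assoc, one_mul, sub_eq_zero] at h1
    exact h1
  have hcommA : A * L = L * A := by
    have h1 : aeval L (q * X) = aeval L (X * q) := by ring_nf
    simpa [_root_.map_mul] using h1
  have hLP : L * P = τ • P := by
    rw [hPdef, mul_smul_comm, hLA, smul_comm]
  have hPL : P * L = τ • P := by
    rw [hPdef, smul_mul_assoc, hcommA, hLA, smul_comm]
  have hAA : A * A = c • A := by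
    have hdvd : (X - C τ) ∣ (q - C c) := dvd_iff_isRoot.mpr (by simp [IsRoot, hc])
    obtain ⟨r, hr⟩ := hdvd
    have hpoly : q * q - C c * q = ((X - C τ) * q) * r := by
      have : q - C c = (X - C τ) * r := hr
      calc q * q - C c * q = (q - C c) * q := by ring
        _ = ((X - C τ) * q) * r := by rw [this]; ring
    have h2 : A * A - c • A = 0 := by
      have := congrArg (aeval L) hpoly
      rw [map_sub, _root_.map_mul, _root_.map_mul, _root_.map_mul, haq, zero_mul] at this
      rw [hAdef, ← this]
      congr 1
      rw [aeval_C, Algebra.smul_def]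
    rw [sub_eq_zero] at h2
    exact h2
  have hPP : P * P = P := by
    rw [hPdef, smul_mul_assoc, mul_smul_comm, hAA, smul_smul, smul_smul]
    congr 1
    field_simp
  have hPu : P *ᵥ u = u := by
    have h1 : A *ᵥ u = c • u := by
      have := aeval_mulVec_eigen L τ u huL q
      rwa [show (aeval τ q : ℝ) = c by
        rw [hc]; exact congrFun (Polynomial.coe_aeval_eq_eval τ) q] at this
    rw [hPdef, Matrix.smul_mulVec, h1, smul_smul, inv_mul_cancel₀ hqτ, one_smul]
  set B : Matrix (Fin k) (Fin k) ℝ := L - τ • P with hBdef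
  have hBP : B * P = 0 := by
    rw [hBdef, sub_mul, hLP, smul_mul_assoc, hPP, sub_self]
  have hPB : P * B = 0 := by
    rw [hBdef, mul_sub, hPL, mul_smul_comm, hPP, sub_self]
  have hPBn : ∀ n : ℕ, 1 ≤ n → P * B ^ n = 0 := by
    intro n hn
    obtain ⟨m, rfl⟩ := Nat.exists_eq_add_of_le hn
    rw [pow_add, pow_one, ← mul_assoc, hPB, zero_mul]
  have hLn : ∀ n : ℕ, 1 ≤ n → L ^ n = B ^ n + τ ^ n • P := by
    intro n hn
    induction n with
    | zero => omega
    | succ m ih =>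
      by_cases hm : 1 ≤ m
      · have hLB : L = B + τ • P := by rw [hBdef, sub_add_cancel]
        calc L ^ (m + 1) = L * L ^ m := by rw [← pow_succ']
          _ = (B + τ • P) * (B ^ m + τ ^ m • P) := by rw [← hLB, ← ih hm]
          _ = B ^ (m + 1) + τ ^ (m + 1) • P := by
              rw [mul_add, add_mul, add_mul, smul_mul_assoc τ P (B ^ m), hPBn m hm, smul_zero,
                add_zero, mul_smul_comm, hBP, smul_zero, zero_add, smul_mul_assoc,
                mul_smul_comm, hPP, smul_smul, ← pow_succ', ← pow_succ']
      · have hm0 : m = 0 := by omega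
        subst hm0
        have h1 : L ^ 1 = B ^ 1 + τ ^ 1 • P := by
          rw [pow_one, pow_one, pow_one, hBdef, sub_add_cancel]
        simpa using h1
  set y : Fin k → ℝ := P *ᵥ x0 with hydef
  have hyeig : L *ᵥ y = τ • y := by
    rw [hydef, Matrix.mulVec_mulVec, hLP, Matrix.smul_mulVec]
  have hcommP : Commute P L := by
    show P * L = L * P
    rw [hPL, hLP]
  have hy0 : y ≠ 0 := by
    intro h0
    have hker : Submodule.span ℝ (Set.range fun jj : Fin k => (L ^ (jj : ℕ)).mulVec x0) ≤
        LinearMap.ker (Matrix.mulVecLin P) := by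
      rw [Submodule.span_le]
      rintro _ ⟨jj, rfl⟩
      simp only [SetLike.mem_coe, LinearMap.mem_ker, Matrix.mulVecLin_apply]
      rw [Matrix.mulVec_mulVec, (hcommP.pow_right (jj : ℕ)).eq, ← Matrix.mulVec_mulVec,
        ← hydef, h0, Matrix.mulVec_zero]
    rw [hx0, top_le_iff] at hker
    have : P *ᵥ u = 0 := by
      have := LinearMap.ker_eq_top.mp hker
      have h2 : Matrix.mulVecLin P u = 0 := by rw [this]; rfl
      simpa using h2
    rw [hPu] at this
    exact hune this
  obtain ⟨cc, hcc⟩ := eigen_span L τ hmult hune huL hyeig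
  -- decay of `B ^ n`
  set Bc : Matrix (Fin k) (Fin k) ℂ := B.map (algebraMap ℝ ℂ) with hBcdef
  set Pc : Matrix (Fin k) (Fin k) ℂ := P.map (algebraMap ℝ ℂ) with hPcdef
  set Lc : Matrix (Fin k) (Fin k) ℂ := L.map (algebraMap ℝ ℂ) with hLcdef
  have hmap_pow : ∀ n : ℕ, (B ^ n).map (algebraMap ℝ ℂ) = Bc ^ n := fun n => by
    rw [hBcdef]; simpa [RingHom.mapMatrix_apply] using map_pow (RingHom.mapMatrix (algebraMap ℝ ℂ)) B n
  have hspec : ∀ z ∈ spectrum ℂ Bc, ‖z‖₊ < τ.toNNReal := by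
    intro z hz
    have hdet : (z • (1 : Matrix (Fin k) (Fin k) ℂ) - Bc).det = 0 := by
      rw [spectrum.mem_iff] at hz
      by_contra hne
      exact hz ((Matrix.isUnit_iff_isUnit_det _).mpr (isUnit_iff_ne_zero.mpr (by
        rwa [Algebra.algebraMap_eq_smul_one])))
    obtain ⟨v, hvne, hv⟩ := (Matrix.exists_mulVec_eq_zero_iff).mpr hdet
    have hBv : Bc *ᵥ v = z • v := by
      rw [Matrix.sub_mulVec, Matrix.smul_mulVec, Matrix.one_mulVec, sub_eq_zero] at hv
      exact hv.symm
    by_cases hz0 : z = 0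
    · subst hz0
      simpa using Real.toNNReal_pos.mpr hτ
    have hPBc : Pc * Bc = 0 := by
      rw [hPcdef, hBcdef, ← Matrix.map_mul, hPB]
      simp
    have hPv : Pc *ᵥ v = 0 := by
      have h2 : Pc *ᵥ (Bc *ᵥ v) = 0 := by
        rw [Matrix.mulVec_mulVec, hPBc, Matrix.zero_mulVec]
      rw [hBv, Matrix.mulVec_smul] at h2
      exact (smul_eq_zero.mp h2).resolve_left hz0
    have hLBc : Lc = Bc + (τ : ℂ) • Pc := by
      ext i jx
      simp only [hLcdef, hBcdef, hPcdef, Matrix.map_apply, Matrix.add_apply, Matrix.smul_apply,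
        hBdef, Matrix.sub_apply, smul_eq_mul, Complex.coe_algebraMap]
      push_cast
      ring
    have hLv : Lc *ᵥ v = z • v := by
      rw [hLBc, Matrix.add_mulVec, Matrix.smul_mulVec, hPv, hBv, smul_zero, add_zero]
    have hPcA : Pc = ((c : ℂ))⁻¹ • (aeval Lc q) := by
      have h1 : (aeval L q).map (algebraMap ℝ ℂ) = aeval Lc q := by
        have := Polynomial.aeval_algHom_apply
          (AlgHom.mapMatrix (R := ℝ) (Complex.ofRealAm) (m := Fin k)) L q
        rw [hLcdef]; simpa [AlgHom.mapMatrix_apply] using this.symm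
      rw [hPcdef, hPdef, ← h1]
      ext i jx
      simp only [Matrix.map_apply, Matrix.smul_apply, smul_eq_mul, Complex.coe_algebraMap]
      push_cast
      ring
    have haevalτ : aeval (τ : ℂ) q = ((c : ℝ) : ℂ) := by
      rw [show ((τ : ℝ) : ℂ) = algebraMap ℝ ℂ τ from rfl,
        Polynomial.aeval_algebraMap_apply_eq_algebraMap_eval, hc]
      rfl
    by_cases hzτ : z = (τ : ℂ)
    · exfalso
      have hLvτ : Lc *ᵥ v = (τ : ℂ) • v := by rw [← hzτ]; exact hLv
      have := aeval_mulVec_eigen Lc (τ : ℂ) v hLvτ q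
      have hPcv : Pc *ᵥ v = v := by
        rw [hPcA, Matrix.smul_mulVec, this, haevalτ, smul_smul,
          inv_mul_cancel₀ (by exact_mod_cast hqτ), one_smul]
      rw [hPv] at hPcv
      exact hvne hPcv.symm
    · have hrootz : (L.charpoly.map (algebraMap ℝ ℂ)).IsRoot z := by
        rw [← Matrix.charpoly_map, IsRoot, eval_charpoly, ← Matrix.exists_mulVec_eq_zero_iff]
        exact ⟨v, hvne, by
          rw [Matrix.sub_mulVec, Matrix.smul_mulVec, Matrix.one_mulVec, ← hLcdef, hLv, sub_self]⟩
      have habs := hroots z hrootz hzτ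
      rw [← norm_toNNReal]
      rw [Real.toNNReal_lt_toNNReal_iff hτ]
      exact habs
  have hsr : spectralRadius ℂ Bc < (τ.toNNReal : ℝ≥0∞) :=
    spectrum.spectralRadius_lt_of_forall_lt Bc hspec
  obtain ⟨r, hr1, hr2⟩ := ENNReal.lt_iff_exists_nnreal_btwn.mp hsr
  have hrτ : (r : ℝ) < τ := by
    rw [ENNReal.coe_lt_coe] at hr2
    calc (r : ℝ) < (τ.toNNReal : ℝ) := by exact_mod_cast hr2
      _ = τ := Real.coe_toNNReal τ hτ.le
  have hgel := spectrum.pow_nnnorm_pow_one_div_tendsto_nhds_spectralRadius Bc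
  have hev : ∀ᶠ n : ℕ in atTop, (‖Bc ^ n‖₊ : ℝ≥0∞) ^ ((1 : ℝ)/(n : ℝ)) < (r : ℝ≥0∞) :=
    hgel.eventually_lt_const hr1
  have hnorm : ∀ᶠ n : ℕ in atTop, ‖Bc ^ n‖ ≤ (r : ℝ) ^ n := by
    filter_upwards [hev, eventually_ge_atTop 1] with n h1 hn
    have hne : (n : ℝ) ≠ 0 := by positivity
    have h3 : ((‖Bc ^ n‖₊ : ℝ≥0∞) ^ ((1 : ℝ)/(n : ℝ))) ^ (n : ℝ) ≤ (r : ℝ≥0∞) ^ (n : ℝ) :=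
      ENNReal.rpow_le_rpow h1.le (by positivity)
    rw [← ENNReal.rpow_mul, one_div, inv_mul_cancel₀ hne, ENNReal.rpow_one,
      ENNReal.rpow_natCast, ← ENNReal.coe_pow, ENNReal.coe_le_coe] at h3
    calc ‖Bc ^ n‖ = ((‖Bc ^ n‖₊ : ℝ≥0) : ℝ) := rfl
      _ ≤ ((r ^ n : ℝ≥0) : ℝ) := by exact_mod_cast h3
      _ = (r : ℝ) ^ n := by push_cast; ring
  have hdecay : ∀ l, Tendsto (fun n : ℕ => (B ^ n *ᵥ x0) l / τ ^ n) atTop (nhds 0) := by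
    intro l
    set S : ℝ := ∑ m, |x0 m| with hS
    have hbound : ∀ᶠ n : ℕ in atTop, ‖(B ^ n *ᵥ x0) l / τ ^ n‖ ≤ S * ((r : ℝ) / τ) ^ n := by
      filter_upwards [hnorm] with n hn
      have hentry : ∀ m, |(B ^ n) l m| ≤ ‖Bc ^ n‖ := by
        intro m
        have h4 : (Bc ^ n) l m = ((algebraMap ℝ ℂ) ((B ^ n) l m)) := by
          rw [← hmap_pow n, Matrix.map_apply]
        have h5 : ‖(Bc ^ n) l m‖ = |(B ^ n) l m| := by
          rw [h4]; exact Complex.norm_real _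
        rw [← h5]
        exact_mod_cast entry_le_norm (Bc ^ n) l m
      have hτn : (0 : ℝ) < τ ^ n := by positivity
      rw [Real.norm_eq_abs, abs_div, abs_of_pos hτn, div_le_iff₀ hτn]
      calc |(B ^ n *ᵥ x0) l| = |∑ m, (B ^ n) l m * x0 m| := by rw [Matrix.mulVec, dotProduct]
        _ ≤ ∑ m, |(B ^ n) l m * x0 m| := Finset.abs_sum_le_sum_abs _ _
        _ ≤ ∑ m, ‖Bc ^ n‖ * |x0 m| := by
            refine Finset.sum_le_sum fun m _ => ?_
            rw [abs_mul]
            exact mul_le_mul_of_nonneg_right (hentry m) (abs_nonneg _)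
        _ = ‖Bc ^ n‖ * S := by rw [← Finset.mul_sum]
        _ ≤ (r : ℝ) ^ n * S := by
            refine mul_le_mul_of_nonneg_right hn ?_
            positivity
        _ = S * ((r : ℝ) / τ) ^ n * τ ^ n := by
            rw [div_pow]
            field_simp
    refine squeeze_zero_norm' hbound ?_
    have h6 : Tendsto (fun n : ℕ => ((r : ℝ) / τ) ^ n) atTop (nhds 0) := by
      apply tendsto_pow_atTop_nhds_zero_of_lt_one
      · positivity
      · rw [div_lt_one hτ]; exact hrτ
    simpa using (tendsto_const_nhds (x := S)).mul h6
  have htends : ∀ l, Tendsto (fun n : ℕ => (L ^ n).mulVec x0 l / τ ^ n) atTop (nhds (y l)) := by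
    intro l
    have heq : ∀ᶠ n : ℕ in atTop,
        (B ^ n *ᵥ x0) l / τ ^ n + y l = (L ^ n).mulVec x0 l / τ ^ n := by
      filter_upwards [eventually_ge_atTop 1] with n hn
      have hτn : (τ : ℝ) ^ n ≠ 0 := by positivity
      rw [hLn n hn, Matrix.add_mulVec, Matrix.smul_mulVec]
      show (B ^ n *ᵥ x0) l / τ ^ n + y l = ((B ^ n *ᵥ x0) l + τ ^ n * (P *ᵥ x0) l) / τ ^ n
      rw [← hydef]
      field_simp
    have h7 := (hdecay l).add_const (y l)
    rw [zero_add] at h7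
    exact Tendsto.congr' heq h7
  have hyl : ∀ l, 0 ≤ y l := by
    intro l
    refine ge_of_tendsto' (htends l) fun n => ?_
    have h8 := hpos n l
    have hτn : (0 : ℝ) < τ ^ n := by positivity
    positivity
  have hccpos : 0 < cc := by
    rcases lt_trichotomy cc 0 with h | h | h
    · exfalso
      have l0 : Fin k := ⟨0, hk⟩
      have h9 : y ⟨0, hk⟩ = cc * u ⟨0, hk⟩ := by rw [hcc]; rfl
      have := hyl ⟨0, hk⟩
      nlinarith [hu ⟨0, hk⟩]
    · exfalso; apply hy0; rw [hcc, h, zero_smul]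
    · exact h
  refine ⟨y, fun l => ?_, htends⟩
  have : y l = cc * u l := by rw [hcc]; rfl
  rw [this]
  exact mul_pos hccpos (hu l)

end PFaux
end PFaux2

/-- both the min and max bounds in the checking relations,
`min_l Mₙ(l,j)/Mₙ(l,j')` and `max_l Mₙ(l,j)/Mₙ(l,j')`, converge to
`τ^{j'-j}`. -/
theorem checking_bounds_converge
    (k : ℕ) (L : Matrix (Fin k) (Fin k) ℝ) (τ : ℝ)
    (hL : StrongPerronFrobenius L τ)
    (x0 : Fin k → ℝ) (hx0 : IsCyclicVec L x0)
    (hpos : ∀ n : ℕ, ∀ i : Fin k, 0 < (L ^ n).mulVec x0 i)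
    (j j' : Fin k) :
    Tendsto (fun n : ℕ =>
        ⨅ l : Fin k, codingMatrix L x0 n l j / codingMatrix L x0 n l j')
      atTop (nhds (τ ^ ((j' : ℤ) - (j : ℤ)))) ∧
    Tendsto (fun n : ℕ =>
        ⨆ l : Fin k, codingMatrix L x0 n l j / codingMatrix L x0 n l j')
      atTop (nhds (τ ^ ((j' : ℤ) - (j : ℤ)))) := by
  classical
  have hk : 0 < k := j.pos
  haveI : Nonempty (Fin k) := ⟨j⟩
  obtain ⟨y, hy, htd⟩ := PFaux.key hk L τ hL x0 hx0 hpos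
  have hτ : 0 < τ := hL.1
  set a : ℕ := k - 1 - (j : ℕ) with ha
  set b : ℕ := k - 1 - (j' : ℕ) with hb
  have hz : τ ^ ((j' : ℤ) - (j : ℤ)) = τ ^ (a : ℤ) / τ ^ (b : ℤ) := by
    rw [← zpow_sub₀ (ne_of_gt hτ)]
    congr 1
    have hj := j.isLt
    have hj' := j'.isLt
    omega
  have hratio : ∀ l : Fin k, Tendsto
      (fun n : ℕ => codingMatrix L x0 n l j / codingMatrix L x0 n l j') atTop
      (nhds (τ ^ ((j' : ℤ) - (j : ℤ)))) := by
    intro l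
    have hta : Tendsto (fun n : ℕ => (L ^ (n + a)).mulVec x0 l / τ ^ (n + a)) atTop
        (nhds (y l)) := (htd l).comp (tendsto_add_atTop_nat a)
    have htb : Tendsto (fun n : ℕ => (L ^ (n + b)).mulVec x0 l / τ ^ (n + b)) atTop
        (nhds (y l)) := (htd l).comp (tendsto_add_atTop_nat b)
    have hq := (hta.div htb (ne_of_gt (hy l))).mul_const (τ ^ ((j' : ℤ) - (j : ℤ)))
    rw [div_self (ne_of_gt (hy l)), one_mul] at hq
    refine Tendsto.congr (fun n => ?_) hq
    have hcj : codingMatrix L x0 n l j = (L ^ (n + a)).mulVec x0 l := rfl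
    have hcj' : codingMatrix L x0 n l j' = (L ^ (n + b)).mulVec x0 l := rfl
    rw [hcj, hcj', hz, zpow_natCast, zpow_natCast]
    have h1 : (L ^ (n + b)).mulVec x0 l ≠ 0 := ne_of_gt (hpos _ _)
    have hτ0 : (τ : ℝ) ≠ 0 := ne_of_gt hτ
    simp only [Pi.div_apply]
    rw [pow_add τ n a, pow_add τ n b]
    field_simp
  constructor
  · exact PFaux.tendsto_iInf' _ _ hratio
  · exact PFaux.tendsto_iSup' _ _ hratio
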